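/- Let B > 0, L > 0 and r ∈ (0, 2], and let ρ, τ : ℕ × ℕ → ℂ both belong to the class R(B, r, L). Then there exist a constant C_B > 0 depending only on B, r, L, and N₀ ∈ ℕ, such that for all natural numbers N ≥ N₀, ∑_{(j,k) : j ≥ N or k ≥ N} |ρ_{j,k} − τ_{j,k}|² ≤ C_B · N^{2−r/2} · e^{−2B N^{r/2}} (in particular this tail series converges). -/

import Mathlib

open Real Set
set_option maxHeartbeats 1000000

-- MVT: for 0 < y < x, x^p - y^p = p * c^(p-1) * (x - y) for some c in Ioo y x
lemma mvt_rpow (p : ℝ) {y x : ℝ} (hy : 0 < y) (hxy : y < x) :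
    ∃ c ∈ Set.Ioo y x, x ^ p - y ^ p = p * c ^ (p - 1) * (x - y) := by
  have hcont : ContinuousOn (fun z : ℝ => z ^ p) (Set.Icc y x) := by
    apply ContinuousOn.rpow_const continuousOn_id
    intro z hz
    exact Or.inl (ne_of_gt (lt_of_lt_of_le hy hz.1))
  have hderiv : ∀ z ∈ Set.Ioo y x, HasDerivAt (fun z : ℝ => z ^ p) (p * z ^ (p - 1)) z := by
    intro z hz
    exact Real.hasDerivAt_rpow_const (Or.inl (ne_of_gt (hy.trans hz.1)))
  obtain ⟨c, hc, hceq⟩ := exists_hasDerivAt_eq_slope (fun z : ℝ => z ^ p)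
    (fun z => p * z ^ (p - 1)) hxy hcont hderiv
  refine ⟨c, hc, ?_⟩
  have hne : x - y ≠ 0 := by linarith
  field_simp at hceq
  linarith [hceq]

-- (a): concavity lower bound
lemma rpow_succ_lower (t : ℝ) (ht : 0 < t) (ht1 : t ≤ 1) {x : ℝ} (hx : 1 ≤ x) :
    x ^ t + t * (x + 1) ^ (t - 1) ≤ (x + 1) ^ t := by
  have hx0 : (0:ℝ) < x := by linarith
  obtain ⟨c, hc, heq⟩ := mvt_rpow t hx0 (by linarith : x < x + 1)
  have hcb : (x + 1) ^ (t - 1) ≤ c ^ (t - 1) :=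
    Real.rpow_le_rpow_of_nonpos (hx0.trans hc.1) hc.2.le (by linarith)
  nlinarith [heq, mul_le_mul_of_nonneg_left hcb ht.le]

-- (b): convexity upper bound
lemma rpow_succ_upper (t : ℝ) (ht : 0 < t) (ht1 : t ≤ 1) {x : ℝ} (hx : 1 ≤ x) :
    (x + 1) ^ (2 - t) ≤ x ^ (2 - t) + (2 - t) * (x + 1) ^ (1 - t) := by
  have hx0 : (0:ℝ) < x := by linarith
  obtain ⟨c, hc, heq⟩ := mvt_rpow (2 - t) hx0 (by linarith : x < x + 1)
  have hcb : c ^ (2 - t - 1) ≤ (x + 1) ^ (2 - t - 1) :=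
    Real.rpow_le_rpow (hx0.trans hc.1).le hc.2.le (by linarith)
  have h1 : (2 - t - 1) = 1 - t := by ring
  rw [h1] at hcb
  rw [h1, show x + 1 - x = 1 by ring, mul_one] at heq
  nlinarith [mul_le_mul_of_nonneg_left hcb (by linarith : (0:ℝ) ≤ 2 - t)]

-- key one-step inequality
lemma key_step (B t : ℝ) (hB : 0 < B) (ht : 0 < t) (ht1 : t ≤ 1) {x : ℝ} (hx : 1 ≤ x)
    (hcond : 8 / (B * t) ≤ (x + 1) ^ t) :
    (x + 1) * Real.exp (-2 * B * x ^ t) ≤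
      (4 * (1 + 2 * B * t) / (B * t)) *
        (x ^ (2 - t) * Real.exp (-2 * B * x ^ t)
          - (x + 1) ^ (2 - t) * Real.exp (-2 * B * (x + 1) ^ t)) := by
  have hx0 : (0:ℝ) < x := by linarith
  have hx10 : (0:ℝ) < x + 1 := by linarith
  set u : ℝ := 2 * B * t * (x + 1) ^ (t - 1) with hu_def
  have hu0 : 0 < u := by positivity
  set A : ℝ := 4 * (1 + 2 * B * t) / (B * t) with hA_def
  have hA0 : 0 < A := by positivity
  clear_value u A
  have hE0 : 0 < Real.exp (-2 * B * x ^ t) := Real.exp_pos _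
  -- exp(-2B(x+1)^t) ≤ exp(-2Bx^t) * exp(-u)
  have h1 : Real.exp (-2 * B * (x + 1) ^ t) ≤ Real.exp (-2 * B * x ^ t) * Real.exp (-u) := by
    rw [← Real.exp_add]
    apply Real.exp_le_exp.mpr
    have := rpow_succ_lower t ht ht1 hx
    nlinarith [this]
  -- exp(-u) ≤ 1/(1+u)
  have h2 : Real.exp (-u) ≤ 1 / (1 + u) := by
    rw [Real.exp_neg, inv_eq_one_div]
    exact one_div_le_one_div_of_le (by linarith) (by linarith [Real.add_one_le_exp u])
  -- suffices the un-exponentiated version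
  suffices hmain : (x + 1) ≤ A * (x ^ (2 - t) - (x + 1) ^ (2 - t) * Real.exp (-u)) by
    have hstep : (x + 1) ^ (2 - t) * Real.exp (-2 * B * (x + 1) ^ t)
        ≤ (x + 1) ^ (2 - t) * (Real.exp (-2 * B * x ^ t) * Real.exp (-u)) :=
      mul_le_mul_of_nonneg_left h1 (by positivity)
    calc (x + 1) * Real.exp (-2 * B * x ^ t)
        ≤ (A * (x ^ (2 - t) - (x + 1) ^ (2 - t) * Real.exp (-u))) * Real.exp (-2 * B * x ^ t) :=
          mul_le_mul_of_nonneg_right hmain hE0.le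
      _ = A * (x ^ (2 - t) * Real.exp (-2 * B * x ^ t)
            - (x + 1) ^ (2 - t) * (Real.exp (-2 * B * x ^ t) * Real.exp (-u))) := by ring
      _ ≤ _ := by
          apply mul_le_mul_of_nonneg_left _ hA0.le
          linarith [hstep]
  -- main algebraic inequality
  have h3 := rpow_succ_upper t ht ht1 hx
  have h4 : (x + 1) ^ (2 - t) ≤ 4 * x ^ (2 - t) := by
    have h2x : x + 1 ≤ 2 * x := by linarith
    calc (x + 1) ^ (2 - t) ≤ (2 * x) ^ (2 - t) :=
          Real.rpow_le_rpow (by positivity) h2x (by linarith)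
      _ = 2 ^ (2 - t) * x ^ (2 - t) := Real.mul_rpow (by norm_num) hx0.le
      _ ≤ 4 * x ^ (2 - t) := by
          apply mul_le_mul_of_nonneg_right _ (by positivity)
          calc (2:ℝ) ^ (2 - t) ≤ 2 ^ (2:ℝ) :=
                Real.rpow_le_rpow_of_exponent_le (by norm_num) (by linarith)
            _ = 4 := by norm_num [Real.rpow_natCast]
  have h5 : (x + 1) ^ (2 - t) * (x + 1) ^ (t - 1) = x + 1 := by
    rw [← Real.rpow_add hx10]
    norm_num
  have h6 : (x + 1) ^ (1 - t) * (x + 1) ^ t = x + 1 := by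
    rw [← Real.rpow_add hx10]
    norm_num
  have h7 : (x + 1) ^ (t - 1) ≤ 1 :=
    Real.rpow_le_one_of_one_le_of_nonpos (by linarith) (by linarith)
  -- x^{2-t} u ≥ (Bt/2)(x+1)
  have h8 : B * t / 2 * (x + 1) ≤ x ^ (2 - t) * u := by
    have : (x + 1) ^ (2 - t) / 4 * u = (B * t / 2) * ((x + 1) ^ (2 - t) * (x + 1) ^ (t - 1)) := by
      rw [hu_def]; ring
    nlinarith [mul_le_mul_of_nonneg_right h4 hu0.le, Real.rpow_pos_of_pos hx10 (t-1)]
  -- (2-t)(x+1)^{1-t} ≤ (Bt/4)(x+1)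
  have h9 : (2 - t) * (x + 1) ^ (1 - t) ≤ B * t / 4 * (x + 1) := by
    have hpos : (0:ℝ) < (x + 1) ^ (1 - t) := Real.rpow_pos_of_pos hx10 _
    have hthis : (x + 1) ^ (1 - t) * (8 / (B * t)) ≤ (x + 1) ^ (1 - t) * (x + 1) ^ t :=
      mul_le_mul_of_nonneg_left hcond hpos.le
    rw [h6] at hthis
    have hBt : 0 < B * t := by positivity
    have h8' : (x + 1) ^ (1 - t) * 8 ≤ (x + 1) * (B * t) := by
      have h := mul_le_mul_of_nonneg_right hthis hBt.le
      rw [mul_assoc, div_mul_cancel₀ (8:ℝ) hBt.ne'] at h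
      exact h
    nlinarith [h8', hpos, mul_pos ht hpos]
  -- u ≤ 2Bt
  have h10 : u ≤ 2 * B * t := by
    rw [hu_def]
    nlinarith [mul_le_mul_of_nonneg_left h7 (by positivity : (0:ℝ) ≤ 2 * B * t)]
  -- conclude
  have hbr : B * t / 4 * (x + 1) ≤ x ^ (2 - t) * (1 + u) - (x + 1) ^ (2 - t) := by
    nlinarith [h3, h8, h9]
  have h1u : (0:ℝ) < 1 + u := by linarith
  have hexp_le : (x + 1) ^ (2 - t) * Real.exp (-u) ≤ (x + 1) ^ (2 - t) / (1 + u) := by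
    rw [div_eq_mul_one_div]
    exact mul_le_mul_of_nonneg_left h2 (by positivity)
  have hBt : 0 < B * t := by positivity
  have hfin : (x + 1) ≤ A * (x ^ (2 - t) - (x + 1) ^ (2 - t) / (1 + u)) := by
    have expand : A * (x ^ (2 - t) - (x + 1) ^ (2 - t) / (1 + u))
        = A / (1 + u) * (x ^ (2 - t) * (1 + u) - (x + 1) ^ (2 - t)) := by
      field_simp
      try ring
    rw [expand]
    have s1 : A / (1 + u) * (B * t / 4 * (x + 1)) ≤
        A / (1 + u) * (x ^ (2 - t) * (1 + u) - (x + 1) ^ (2 - t)) :=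
      mul_le_mul_of_nonneg_left hbr (by positivity)
    have s2 : A / (1 + u) * (B * t / 4 * (x + 1)) = (1 + 2 * B * t) * (x + 1) / (1 + u) := by
      rw [hA_def]
      field_simp
    have s3 : x + 1 ≤ (1 + 2 * B * t) * (x + 1) / (1 + u) := by
      rw [le_div_iff₀ h1u]
      nlinarith [mul_le_mul_of_nonneg_left h10 (by linarith : (0:ℝ) ≤ x + 1)]
    linarith
  linarith [hfin, mul_le_mul_of_nonneg_left (sub_le_sub_left hexp_le (x ^ (2-t))) hA0.le]

lemma tail_telescope {f F : ℕ → ℝ} (hf : ∀ s, 0 ≤ f s) (hF0 : ∀ s, 0 ≤ F s) (N : ℕ)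
    (h : ∀ s, N ≤ s → f s ≤ F s - F (s + 1)) :
    Summable (fun s => if N ≤ s then f s else 0) ∧
      ∑' s, (if N ≤ s then f s else 0) ≤ F N := by
  set g : ℕ → ℝ := fun s => if N ≤ s then f s else 0 with hg
  have hg0 : ∀ s, 0 ≤ g s := fun s => by
    by_cases hs : N ≤ s <;> simp [hg, hs, hf s]
  have hP : ∀ M, ∑ s ∈ Finset.range (N + M), g s ≤ F N - F (N + M) := by
    intro M
    induction M with
    | zero =>
      have hz : ∀ s ∈ Finset.range N, g s = 0 := fun s hs => by
        simp [hg, Nat.not_le.mpr (Finset.mem_range.mp hs)]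
      simp only [Nat.add_zero]
      rw [Finset.sum_congr rfl hz]
      simp
    | succ M ih =>
      rw [show N + (M + 1) = (N + M) + 1 from rfl, Finset.sum_range_succ]
      have hgs : g (N + M) ≤ F (N + M) - F (N + M + 1) := by
        simp only [hg, if_pos (Nat.le_add_right N M)]
        exact h _ (Nat.le_add_right N M)
      have := ih
      linarith
  have hbound : ∀ M, ∑ s ∈ Finset.range M, g s ≤ F N := by
    intro M
    calc ∑ s ∈ Finset.range M, g s ≤ ∑ s ∈ Finset.range (N + M), g s :=
          Finset.sum_le_sum_of_subset_of_nonneg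
            (Finset.range_subset_range.mpr (Nat.le_add_left M N)) (fun i _ _ => hg0 i)
      _ ≤ F N - F (N + M) := hP M
      _ ≤ F N := by linarith [hF0 (N + M)]
  exact ⟨summable_of_sum_range_le hg0 hbound, Real.tsum_le_of_sum_range_le hg0 hbound⟩


/-- The class `R(B, r, L)` of density matrices with exponentially decaying entries:
`|ρ_{j,k}| ≤ L exp(-B (j+k)^{r/2})`. -/
def inClassR (B r L : ℝ) (ρ : ℕ × ℕ → ℂ) : Prop :=
  ∀ j k : ℕ, ‖ρ (j, k)‖ ≤ L * Real.exp (-B * ((j + k : ℕ) : ℝ) ^ (r / 2))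

/-- If `ρ, τ ∈ R(B, r, L)` then there exist `C_B > 0` (depending only on `B, r, L`) and `N₀`
such that for all `N ≥ N₀`, the tail sum
`∑_{(j,k) : j ≥ N ∨ k ≥ N} |ρ_{j,k} − τ_{j,k}|²` converges and is at most
`C_B N^{2−r/2} e^{−2B N^{r/2}}`. -/
theorem tail_bias_bound (B L r : ℝ) (hB : 0 < B) (hL : 0 < L) (hr : r ∈ Set.Ioc (0 : ℝ) 2)
    (ρ τ : ℕ × ℕ → ℂ) (hρ : inClassR B r L ρ) (hτ : inClassR B r L τ) :
    ∃ C : ℝ, 0 < C ∧ ∃ N₀ : ℕ, ∀ N : ℕ, N₀ ≤ N →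
      Summable (fun p : {p : ℕ × ℕ // N ≤ p.1 ∨ N ≤ p.2} =>
        ‖ρ (p : ℕ × ℕ) - τ (p : ℕ × ℕ)‖ ^ 2) ∧
      ∑' p : {p : ℕ × ℕ // N ≤ p.1 ∨ N ≤ p.2},
        ‖ρ (p : ℕ × ℕ) - τ (p : ℕ × ℕ)‖ ^ 2
      ≤ C * (N : ℝ) ^ (2 - r / 2) * Real.exp (-2 * B * (N : ℝ) ^ (r / 2)) := by
  obtain ⟨hr0, hr2⟩ := hr
  have ht : 0 < r / 2 := by linarith
  have ht1 : r / 2 ≤ 1 := by linarith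
  refine ⟨4 * L ^ 2 * (4 * (1 + 2 * B * (r / 2)) / (B * (r / 2))), by positivity,
    max 1 (Nat.ceil ((8 / (B * (r / 2))) ^ (1 / (r / 2)))), ?_⟩
  set C : ℝ := 4 * L ^ 2 * (4 * (1 + 2 * B * (r / 2)) / (B * (r / 2))) with hC_def
  intro N hN
  have hN1 : 1 ≤ N := le_trans (le_max_left _ _) hN
  -- the condition for key_step
  have hcond : ∀ s : ℕ, N ≤ s → 8 / (B * (r / 2)) ≤ ((s : ℝ) + 1) ^ (r / 2) := by
    intro s hs
    have hy0 : (0:ℝ) ≤ (8 / (B * (r / 2))) ^ (1 / (r / 2)) := by positivity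
    have hys : (8 / (B * (r / 2))) ^ (1 / (r / 2)) ≤ (s : ℝ) := by
      have hceil : Nat.ceil ((8 / (B * (r / 2))) ^ (1 / (r / 2))) ≤ s :=
        le_trans (le_max_right _ _) (le_trans hN hs)
      exact_mod_cast Nat.ceil_le.mp hceil
    have heq : ((8 / (B * (r / 2))) ^ (1 / (r / 2))) ^ (r / 2) = 8 / (B * (r / 2)) := by
      rw [← Real.rpow_mul (by positivity), one_div_mul_cancel ht.ne', Real.rpow_one]
    calc 8 / (B * (r / 2)) = ((8 / (B * (r / 2))) ^ (1 / (r / 2))) ^ (r / 2) := heq.symm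
      _ ≤ ((s : ℝ) + 1) ^ (r / 2) :=
          Real.rpow_le_rpow hy0 (by linarith) ht.le
  -- building blocks
  set w : ℕ → ℝ := fun n => 4 * L ^ 2 * Real.exp (-2 * B * (n : ℝ) ^ (r / 2)) with hw_def
  set K : ℕ → ℝ := fun n => ((n : ℝ) + 1) * w n with hK_def
  set F : ℕ → ℝ := fun n => C * (n : ℝ) ^ (2 - r / 2) * Real.exp (-2 * B * (n : ℝ) ^ (r / 2))
    with hF_def
  have hw0 : ∀ n, 0 ≤ w n := fun n => by rw [hw_def]; positivity
  have hK0 : ∀ n, 0 ≤ K n := fun n => by rw [hK_def]; simp only; positivity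
  have hF0 : ∀ n, 0 ≤ F n := fun n => by
    rw [hF_def]; simp only
    have : (0:ℝ) ≤ (n:ℝ) := Nat.cast_nonneg n
    positivity
  -- key step on naturals
  have hkey : ∀ s : ℕ, N ≤ s → K s ≤ F s - F (s + 1) := by
    intro s hs
    have hx : (1:ℝ) ≤ (s : ℝ) := by exact_mod_cast le_trans hN1 hs
    have h := key_step B (r / 2) hB ht ht1 hx (hcond s hs)
    have h4 := mul_le_mul_of_nonneg_left h (by positivity : (0:ℝ) ≤ 4 * L ^ 2)
    rw [hK_def, hF_def, hw_def]
    simp only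
    push_cast
    rw [hC_def]
    nlinarith [h4]
  obtain ⟨hg'sum, hg'le⟩ := tail_telescope hK0 hF0 N hkey
  -- the sets
  set S : Set (ℕ × ℕ) := {p | N ≤ p.1 ∨ N ≤ p.2} with hS_def
  set S' : Set (ℕ × ℕ) := {p | N ≤ p.1 + p.2} with hS'_def
  have hSS' : S ⊆ S' := by
    intro p hp
    rw [hS_def] at hp; rw [hS'_def]
    rcases hp with h | h
    · exact le_trans h (Nat.le_add_right _ _)
    · exact le_trans h (Nat.le_add_left _ _)
  set G : ℕ × ℕ → ℝ := fun p => w (p.1 + p.2) with hG_def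
  have hG0 : ∀ p, 0 ≤ G p := fun p => hw0 _
  -- rows of the indicator function
  have hrow : ∀ n : ℕ, ∑ p ∈ Finset.HasAntidiagonal.antidiagonal n, Set.indicator S' G p
      = (if N ≤ n then K n else 0) := by
    intro n
    by_cases hn : N ≤ n
    · rw [if_pos hn]
      have hconst : ∀ p ∈ Finset.HasAntidiagonal.antidiagonal n, Set.indicator S' G p = w n := by
        intro p hp
        have hpn : p.1 + p.2 = n := Finset.HasAntidiagonal.mem_antidiagonal.mp hp
        have hmem : p ∈ S' := by rw [hS'_def]; simpa [hpn] using hn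
        rw [Set.indicator_of_mem hmem, hG_def]
        simp only [hpn]
      rw [Finset.sum_congr rfl hconst, Finset.sum_const, Finset.Nat.card_antidiagonal,
        nsmul_eq_mul, hK_def]
      push_cast
      ring
    · rw [if_neg hn]
      apply Finset.sum_eq_zero
      intro p hp
      have hpn : p.1 + p.2 = n := Finset.HasAntidiagonal.mem_antidiagonal.mp hp
      apply Set.indicator_of_notMem
      rw [hS'_def]
      simpa [hpn] using hn
  -- sigma machinery
  set e : (Σ n : ℕ, Finset.HasAntidiagonal.antidiagonal n) ≃ ℕ × ℕ := Finset.HasAntidiagonal.sigmaAntidiagonalEquivProd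
    with he_def
  have happ : ∀ (n : ℕ) (p : Finset.HasAntidiagonal.antidiagonal n), e ⟨n, p⟩ = (p : ℕ × ℕ) := by
    intro n p; rfl
  have hrow' : ∀ n : ℕ, ∑' p : Finset.HasAntidiagonal.antidiagonal n, Set.indicator S' G (e ⟨n, p⟩)
      = (if N ≤ n then K n else 0) := by
    intro n
    calc ∑' p : Finset.HasAntidiagonal.antidiagonal n, Set.indicator S' G (e ⟨n, p⟩)
        = ∑' p : Finset.HasAntidiagonal.antidiagonal n, Set.indicator S' G (p : ℕ × ℕ) := by
          exact tsum_congr fun p => by rw [happ]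
      _ = ∑ p ∈ Finset.HasAntidiagonal.antidiagonal n, Set.indicator S' G p :=
          Finset.tsum_subtype _ _
      _ = _ := hrow n
  have hfib : ∀ n : ℕ, Summable (fun p : Finset.HasAntidiagonal.antidiagonal n =>
      Set.indicator S' G (e ⟨n, p⟩)) := fun n => Summable.of_finite
  have hsig : Summable (fun x : Σ n : ℕ, Finset.HasAntidiagonal.antidiagonal n => Set.indicator S' G (e x)) := by
    apply (summable_sigma_of_nonneg ?_).mpr
    · refine ⟨hfib, ?_⟩
      apply Summable.congr hg'sum
      intro n
      exact (hrow' n).symm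
    · intro x
      exact Set.indicator_nonneg (fun p _ => hG0 p) _
  have hindS' : Summable (Set.indicator S' G) := e.summable_iff.mp hsig
  have htsumS' : ∑' p : ℕ × ℕ, Set.indicator S' G p ≤ F N := by
    rw [← e.tsum_eq (Set.indicator S' G)]
    rw [Summable.tsum_sigma' hfib hsig]
    calc ∑' n, ∑' p : Finset.HasAntidiagonal.antidiagonal n, Set.indicator S' G (e ⟨n, p⟩)
        = ∑' n, (if N ≤ n then K n else 0) := tsum_congr hrow'
      _ ≤ F N := hg'le
  -- from S' down to S
  have hindS : Summable (Set.indicator S G) := by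
    apply Summable.of_nonneg_of_le (fun p => Set.indicator_nonneg (fun q _ => hG0 q) p)
      (fun p => Set.indicator_le_indicator_of_subset hSS' hG0 p) hindS'
  have hsubS : Summable (fun p : S => G (p : ℕ × ℕ)) :=
    summable_subtype_iff_indicator.mpr hindS
  -- pointwise bound
  have hpt : ∀ p : ℕ × ℕ, ‖ρ p - τ p‖ ^ 2 ≤ G p := by
    intro p
    have h2 := hρ p.1 p.2
    have h3 := hτ p.1 p.2
    rw [Prod.mk.eta] at h2 h3
    have h1 : ‖ρ p - τ p‖ ≤ 2 * L * Real.exp (-B * ((p.1 + p.2 : ℕ) : ℝ) ^ (r / 2)) := by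
      calc ‖ρ p - τ p‖ ≤ ‖ρ p‖ + ‖τ p‖ := norm_sub_le _ _
        _ ≤ _ := by linarith
    have hEE : Real.exp (-B * ((p.1 + p.2 : ℕ) : ℝ) ^ (r / 2)) *
        Real.exp (-B * ((p.1 + p.2 : ℕ) : ℝ) ^ (r / 2))
        = Real.exp (-2 * B * ((p.1 + p.2 : ℕ) : ℝ) ^ (r / 2)) := by
      rw [← Real.exp_add]; ring_nf
    calc ‖ρ p - τ p‖ ^ 2 ≤ (2 * L * Real.exp (-B * ((p.1 + p.2 : ℕ) : ℝ) ^ (r / 2))) ^ 2 :=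
          pow_le_pow_left₀ (norm_nonneg _) h1 2
      _ = G p := by
          rw [hG_def]
          simp only
          rw [hw_def]
          simp only
          push_cast
          push_cast at hEE
          nlinarith [hEE]
  -- summability of the target
  have hsubtype_eq : ∀ p : {p : ℕ × ℕ // N ≤ p.1 ∨ N ≤ p.2}, ((p : ℕ × ℕ) ∈ S) := fun p => p.2
  have hsummain : Summable (fun p : {p : ℕ × ℕ // N ≤ p.1 ∨ N ≤ p.2} =>
      ‖ρ (p : ℕ × ℕ) - τ (p : ℕ × ℕ)‖ ^ 2) := by
    refine Summable.of_nonneg_of_le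
      (f := fun p : {p : ℕ × ℕ // N ≤ p.1 ∨ N ≤ p.2} => G (p : ℕ × ℕ))
      (fun p => by positivity) (fun p => hpt (p : ℕ × ℕ)) ?_
    exact hsubS
  refine ⟨hsummain, ?_⟩
  calc ∑' p : {p : ℕ × ℕ // N ≤ p.1 ∨ N ≤ p.2}, ‖ρ (p : ℕ × ℕ) - τ (p : ℕ × ℕ)‖ ^ 2
      ≤ ∑' p : S, G (p : ℕ × ℕ) := Summable.tsum_le_tsum (fun p => hpt _) hsummain hsubS
    _ = ∑' p : ℕ × ℕ, Set.indicator S G p := tsum_subtype S G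
    _ ≤ ∑' p : ℕ × ℕ, Set.indicator S' G p :=
        Summable.tsum_le_tsum (fun p => Set.indicator_le_indicator_of_subset hSS' hG0 p) hindS hindS'
    _ ≤ F N := htsumS'
    _ = C * (N : ℝ) ^ (2 - r / 2) * Real.exp (-2 * B * (N : ℝ) ^ (r / 2)) := by
        rw [hF_def]
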